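/- Existence of projectivities: Given any three distinct points P, Q, R on a line l, and any three distinct points P', Q', R' on a line m, there exists a projectivity π from the range of l to the range of m such that π(P) = P', π(Q) = Q', and π(R) = R'. -/
import Mathlib


open Configuration

universe u
variable (P L : Type u) [Membership P L]

/-- Three points are collinear if some line passes through all three. -/
def Col (A B C : P) : Prop := ∃ l : L, A ∈ l ∧ B ∈ l ∧ C ∈ l

/-- Every line of `L` is incident with at least `n` distinct points. -/
def LinesHaveAtLeast (n : ℕ) : Prop :=
  ∀ l : L, ∃ s : Finset P, n ≤ s.card ∧ ∀ X ∈ s, X ∈ l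

/-- The range of a line `l` : the points incident with `l`. -/
abbrev Rng (l : L) : Type _ := {X : P // X ∈ l}

/-- `f` is the perspectivity from the range of `l` to the range of `m` with
center `O`, a point outside both `l` and `m` : each point `X` of `l` is mapped
to the point `(OX)·m`, i.e. `O`, `X` and `f X` are collinear. -/
def IsPerspectivity (l m : L) (f : Rng P L l → Rng P L m) : Prop :=
  ∃ O : P, O ∉ l ∧ O ∉ m ∧
    ∀ X : Rng P L l, ∃ k : L, O ∈ k ∧ (X : P) ∈ k ∧ ((f X : P)) ∈ k

/-- A projectivity between ranges of lines : a composite of finitely many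
perspectivities. -/
inductive IsProjectivity : (l m : L) → (Rng P L l → Rng P L m) → Prop where
  | persp {l m : L} {f : Rng P L l → Rng P L m} :
      IsPerspectivity P L l m f → IsProjectivity l m f
  | comp {l m n : L} {f : Rng P L l → Rng P L m} {g : Rng P L m → Rng P L n} :
      IsProjectivity l m f → IsProjectivity m n g → IsProjectivity l n (g ∘ f)

section Helpers
set_option linter.unusedSectionVars false
variable {P L}
variable [Configuration.ProjectivePlane P L]

open Configuration.HasPoints (mkPoint mkPoint_ax)
open Configuration.HasLines (mkLine mkLine_ax)

lemma line_unique {A B : P} {l k : L} (hAB : A ≠ B) (h1 : A ∈ l) (h2 : B ∈ l)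
    (h3 : A ∈ k) (h4 : B ∈ k) : l = k :=
  (Nondegenerate.eq_or_eq h1 h2 h3 h4).resolve_left hAB

lemma point_unique {A B : P} {l k : L} (hlk : l ≠ k) (h1 : A ∈ l) (h2 : A ∈ k)
    (h3 : B ∈ l) (h4 : B ∈ k) : A = B :=
  (Nondegenerate.eq_or_eq h1 h3 h2 h4).resolve_right hlk

lemma exists_third (h6 : LinesHaveAtLeast P L 6) (l : L) (a b : P) :
    ∃ X : P, X ∈ l ∧ X ≠ a ∧ X ≠ b := by
  classical
  obtain ⟨s, hcard, hmem⟩ := h6 l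
  have h2 : ({a, b} : Finset P).card ≤ 2 := Finset.card_insert_le _ _ |>.trans (by simp)
  have h3 := Finset.card_le_card_sdiff_add_card (s := s) (t := {a, b})
  have : 0 < (s \ {a, b}).card := by omega
  obtain ⟨X, hX⟩ := Finset.card_pos.mp this
  simp only [Finset.mem_sdiff, Finset.mem_insert, Finset.mem_singleton] at hX
  exact ⟨X, hmem X hX.1, fun h => hX.2 (Or.inl h), fun h => hX.2 (Or.inr h)⟩

noncomputable def persp (l m : L) (O : P) (hOl : O ∉ l) (hOm : O ∉ m) :
    Rng P L l → Rng P L m := fun X =>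
  have hOX : O ≠ (X : P) := fun h => hOl (h ▸ X.2)
  have hk : mkLine hOX ≠ m := fun h => hOm (h ▸ (mkLine_ax hOX).1)
  ⟨mkPoint hk, (mkPoint_ax hk).2⟩

lemma persp_spec {l m : L} {O : P} (hOl : O ∉ l) (hOm : O ∉ m) (X : Rng P L l) :
    ∃ k : L, O ∈ k ∧ (X : P) ∈ k ∧ ((persp l m O hOl hOm X : P)) ∈ k := by
  have hOX : O ≠ (X : P) := fun h => hOl (h ▸ X.2)
  have hk : mkLine hOX ≠ m := fun h => hOm (h ▸ (mkLine_ax hOX).1)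
  exact ⟨mkLine hOX, (mkLine_ax hOX).1, (mkLine_ax hOX).2, (mkPoint_ax hk).1⟩

lemma persp_isPersp {l m : L} {O : P} (hOl : O ∉ l) (hOm : O ∉ m) :
    IsPerspectivity P L l m (persp l m O hOl hOm) :=
  ⟨O, hOl, hOm, persp_spec hOl hOm⟩

lemma persp_eq {l m : L} {O : P} (hOl : O ∉ l) (hOm : O ∉ m)
    (X : Rng P L l) (Y : P) (hY : Y ∈ m) (k : L) (hOk : O ∈ k) (hXk : (X : P) ∈ k)
    (hYk : Y ∈ k) : persp l m O hOl hOm X = ⟨Y, hY⟩ := by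
  have hOX : O ≠ (X : P) := fun h => hOl (h ▸ X.2)
  have hne : mkLine hOX ≠ m := fun h => hOm (h ▸ (mkLine_ax hOX).1)
  have hkeq : mkLine hOX = k :=
    line_unique hOX (mkLine_ax hOX).1 (mkLine_ax hOX).2 hOk hXk
  exact Subtype.ext
    (point_unique hne (mkPoint_ax hne).1 (mkPoint_ax hne).2 (hkeq ▸ hYk) hY)

lemma persp_inj {l m : L} {O : P} (hOl : O ∉ l) (hOm : O ∉ m) :
    Function.Injective (persp l m O hOl hOm) := by
  intro X Y h
  obtain ⟨k1, hO1, hX1, hZ1⟩ := persp_spec hOl hOm X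
  obtain ⟨k2, hO2, hX2, hZ2⟩ := persp_spec hOl hOm Y
  have hZm : ((persp l m O hOl hOm X : P)) ∈ m := (persp l m O hOl hOm X).2
  have hOZ : O ≠ (persp l m O hOl hOm X : P) := fun hh => hOm (hh ▸ hZm)
  have hZ2' : (persp l m O hOl hOm X : P) ∈ k2 := by rw [h]; exact hZ2
  have hk : k1 = k2 := line_unique hOZ hO1 hZ1 hO2 hZ2'
  have hk1l : k1 ≠ l := fun hh => hOl (hh ▸ hO1)
  exact Subtype.ext (point_unique hk1l hX1 X.2 (hk ▸ hX2) Y.2)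

lemma good_case (h6 : LinesHaveAtLeast P L 6) (l m : L) (hlm : l ≠ m)
    (A B C : P) (hA : A ∈ l) (hB : B ∈ l) (hC : C ∈ l)
    (hAB : A ≠ B) (hAC : A ≠ C) (hBC : B ≠ C)
    (A' B' C' : P) (hA' : A' ∈ m) (hB' : B' ∈ m) (hC' : C' ∈ m)
    (hAB' : A' ≠ B') (hAC' : A' ≠ C') (hBC' : B' ≠ C')
    (hAm : A ∉ m) (hA'l : A' ∉ l) :
    ∃ f : Rng P L l → Rng P L m, IsProjectivity P L l m f ∧
      f ⟨A, hA⟩ = ⟨A', hA'⟩ ∧ f ⟨B, hB⟩ = ⟨B', hB'⟩ ∧ f ⟨C, hC⟩ = ⟨C', hC'⟩ := by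
  have hAA' : A ≠ A' := fun h => hAm (h ▸ hA')
  set a : L := mkLine hAA' with ha_def
  have hAa : A ∈ a := (mkLine_ax hAA').1
  have hA'a : A' ∈ a := (mkLine_ax hAA').2
  have hal : a ≠ l := fun h => hA'l (h ▸ hA'a)
  have ham : a ≠ m := fun h => hAm (h ▸ hAa)
  -- choose Y on l, Y ≠ A, Y ∉ m
  obtain ⟨Y, hYl, hYA, hYZ⟩ := exists_third h6 l A (mkPoint hlm)
  have hYm : Y ∉ m := fun h =>
    hYZ (point_unique hlm hYl h (mkPoint_ax hlm).1 (mkPoint_ax hlm).2)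
  have hA'Y : A' ≠ Y := fun h => hA'l (h ▸ hYl)
  set n : L := mkLine hA'Y with hn_def
  have hA'n : A' ∈ n := (mkLine_ax hA'Y).1
  have hYn : Y ∈ n := (mkLine_ax hA'Y).2
  have hnl : n ≠ l := fun h => hA'l (h ▸ hA'n)
  have hnm : n ≠ m := fun h => hYm (h ▸ hYn)
  have hna : n ≠ a := fun h => hYA (point_unique hal (h ▸ hYn) hYl hAa hA)
  -- choose center S on a
  obtain ⟨S, hSa, hSA, hSA'⟩ := exists_third h6 a A A'
  have hSl : S ∉ l := fun h => hSA (point_unique hal hSa h hAa hA)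
  have hSn : S ∉ n := fun h => hSA' (point_unique (Ne.symm hna) hSa h hA'a hA'n)
  set f1 := persp l n S hSl hSn with hf1_def
  have hf1A : f1 ⟨A, hA⟩ = ⟨A', hA'n⟩ :=
    persp_eq hSl hSn ⟨A, hA⟩ A' hA'n a hSa hAa hA'a
  set B1 : P := (f1 ⟨B, hB⟩ : P) with hB1_def
  have hB1n : B1 ∈ n := (f1 ⟨B, hB⟩).2
  set C1 : P := (f1 ⟨C, hC⟩ : P) with hC1_def
  have hC1n : C1 ∈ n := (f1 ⟨C, hC⟩).2
  obtain ⟨kB, hSkB, hBkB, hB1kB⟩ := persp_spec hSl hSn ⟨B, hB⟩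
  obtain ⟨kC, hSkC, hCkC, hC1kC⟩ := persp_spec hSl hSn ⟨C, hC⟩
  have hB1A' : B1 ≠ A' := by
    intro h
    have hkBa : kB = a := line_unique hSA' hSkB (h ▸ hB1kB) hSa hA'a
    exact hAB (point_unique hal hAa hA (hkBa ▸ hBkB) hB)
  have hC1A' : C1 ≠ A' := by
    intro h
    have hkCa : kC = a := line_unique hSA' hSkC (h ▸ hC1kC) hSa hA'a
    exact hAC (point_unique hal hAa hA (hkCa ▸ hCkC) hC)
  have hB1C1 : B1 ≠ C1 := fun h =>
    hBC (congrArg Subtype.val (persp_inj hSl hSn (Subtype.ext h)))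
  have hB1B' : B1 ≠ B' := fun h =>
    hB1A' (point_unique hnm hB1n (h ▸ hB') hA'n hA')
  have hC1C' : C1 ≠ C' := fun h =>
    hC1A' (point_unique hnm hC1n (h ▸ hC') hA'n hA')
  set b : L := mkLine hB1B' with hb_def
  have hB1b : B1 ∈ b := (mkLine_ax hB1B').1
  have hB'b : B' ∈ b := (mkLine_ax hB1B').2
  set c : L := mkLine hC1C' with hc_def
  have hC1c : C1 ∈ c := (mkLine_ax hC1C').1
  have hC'c : C' ∈ c := (mkLine_ax hC1C').2
  have hbc : b ≠ c := by
    intro h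
    have hbn : b = n := line_unique hB1C1 hB1b (h ▸ hC1c) hB1n hC1n
    exact hAB' (point_unique hnm hA'n hA' (hbn ▸ hB'b) hB')
  set O : P := mkPoint hbc with hO_def
  have hOb : O ∈ b := (mkPoint_ax hbc).1
  have hOc : O ∈ c := (mkPoint_ax hbc).2
  have hOn : O ∉ n := by
    intro h
    by_cases hOB1 : O = B1
    · have hOC1 : O ≠ C1 := fun hh => hB1C1 (hOB1.symm.trans hh)
      have hcn : c = n := line_unique hOC1 hOc hC1c h hC1n
      exact hAC' (point_unique hnm hA'n hA' (hcn ▸ hC'c) hC')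
    · have hbn : b = n := line_unique hOB1 hOb hB1b h hB1n
      exact hAB' (point_unique hnm hA'n hA' (hbn ▸ hB'b) hB')
  have hOm : O ∉ m := by
    intro h
    by_cases hOB' : O = B'
    · have hOC' : O ≠ C' := fun hh => hBC' (hOB'.symm.trans hh)
      have hcm : c = m := line_unique hOC' hOc hC'c h hC'
      exact hC1A' (point_unique (Ne.symm hnm) (hcm ▸ hC1c) hC1n hA' hA'n)
    · have hbm : b = m := line_unique hOB' hOb hB'b h hB'
      exact hB1A' (point_unique (Ne.symm hnm) (hbm ▸ hB1b) hB1n hA' hA'n)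
  set f2 := persp n m O hOn hOm with hf2_def
  have hOA' : O ≠ A' := fun h => hOn (h ▸ hA'n)
  have hf2A : f2 ⟨A', hA'n⟩ = ⟨A', hA'⟩ :=
    persp_eq hOn hOm ⟨A', hA'n⟩ A' hA' (mkLine hOA' : L)
      (mkLine_ax hOA').1 (mkLine_ax hOA').2 (mkLine_ax hOA').2
  have hf2B : f2 ⟨B1, hB1n⟩ = ⟨B', hB'⟩ :=
    persp_eq hOn hOm ⟨B1, hB1n⟩ B' hB' b hOb hB1b hB'b
  have hf2C : f2 ⟨C1, hC1n⟩ = ⟨C', hC'⟩ :=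
    persp_eq hOn hOm ⟨C1, hC1n⟩ C' hC' c hOc hC1c hC'c
  refine ⟨f2 ∘ f1,
    IsProjectivity.comp (.persp (persp_isPersp hSl hSn)) (.persp (persp_isPersp hOn hOm)),
    ?_, ?_, ?_⟩
  · show f2 (f1 ⟨A, hA⟩) = _
    rw [hf1A, hf2A]
  · show f2 (f1 ⟨B, hB⟩) = _
    rw [show f1 ⟨B, hB⟩ = ⟨B1, hB1n⟩ from rfl, hf2B]
  · show f2 (f1 ⟨C, hC⟩) = _
    rw [show f1 ⟨C, hC⟩ = ⟨C1, hC1n⟩ from rfl, hf2C]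


lemma exists_off_two (h6 : LinesHaveAtLeast P L 6) (l m : L) :
    ∃ X : P, X ∉ l ∧ X ∉ m := by
  by_cases hlm : l = m
  · obtain ⟨p, hp⟩ := Nondegenerate.exists_point (P := P) l
    exact ⟨p, hp, hlm ▸ hp⟩
  · have hZl : (mkPoint hlm : P) ∈ l := (mkPoint_ax hlm).1
    have hZm : (mkPoint hlm : P) ∈ m := (mkPoint_ax hlm).2
    obtain ⟨X0, hX0l, hX0Z, -⟩ := exists_third h6 l (mkPoint hlm) (mkPoint hlm)
    obtain ⟨Y0, hY0m, hY0Z, -⟩ := exists_third h6 m (mkPoint hlm) (mkPoint hlm)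
    have hXY : X0 ≠ Y0 := fun h => hX0Z (point_unique hlm hX0l (h ▸ hY0m) hZl hZm)
    set k : L := mkLine hXY with hk_def
    have hX0k : X0 ∈ k := (mkLine_ax hXY).1
    have hY0k : Y0 ∈ k := (mkLine_ax hXY).2
    have hkl : k ≠ l := fun h => hY0Z (point_unique hlm (h ▸ hY0k) hY0m hZl hZm)
    have hkm : k ≠ m := fun h => hX0Z (point_unique hlm hX0l (h ▸ hX0k) hZl hZm)
    obtain ⟨X, hXk, hXX0, hXY0⟩ := exists_third h6 k X0 Y0
    refine ⟨X, fun h => hXX0 (point_unique hkl hXk h hX0k hX0l), fun h => hXY0 (point_unique hkm hXk h hY0k hY0m)⟩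

lemma proj_aux (h6 : LinesHaveAtLeast P L 6)
    (l m : L)
    (A B C : P) (hA : A ∈ l) (hB : B ∈ l) (hC : C ∈ l)
    (hAB : A ≠ B) (hAC : A ≠ C) (hBC : B ≠ C)
    (A' B' C' : P) (hA' : A' ∈ m) (hB' : B' ∈ m) (hC' : C' ∈ m)
    (hAB' : A' ≠ B') (hAC' : A' ≠ C') (hBC' : B' ≠ C') :
    ∃ f : Rng P L l → Rng P L m, IsProjectivity P L l m f ∧
      f ⟨A, hA⟩ = ⟨A', hA'⟩ ∧ f ⟨B, hB⟩ = ⟨B', hB'⟩ ∧ f ⟨C, hC⟩ = ⟨C', hC'⟩ := by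
  obtain ⟨A1, hA1l, hA1m⟩ := exists_off_two h6 l m
  have hAA1 : A ≠ A1 := fun h => hA1l (h ▸ hA)
  set a1 : L := mkLine hAA1 with ha1_def
  have hAa1 : A ∈ a1 := (mkLine_ax hAA1).1
  have hA1a1 : A1 ∈ a1 := (mkLine_ax hAA1).2
  have ha1l : a1 ≠ l := fun h => hA1l (h ▸ hA1a1)
  have hA1A' : A1 ≠ A' := fun h => hA1m (h ▸ hA')
  set d : L := mkLine hA1A' with hd_def
  have hA1d : A1 ∈ d := (mkLine_ax hA1A').1
  have hA'd : A' ∈ d := (mkLine_ax hA1A').2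
  have hdl : d ≠ l := fun h => hA1l (h ▸ hA1d)
  obtain ⟨Y, hYl, hYA, hYZ⟩ := exists_third h6 l A (mkPoint hdl)
  have hA1Y : A1 ≠ Y := fun h => hA1l (h ▸ hYl)
  set n : L := mkLine hA1Y with hn_def
  have hA1n : A1 ∈ n := (mkLine_ax hA1Y).1
  have hYn : Y ∈ n := (mkLine_ax hA1Y).2
  have hnl : n ≠ l := fun h => hA1l (h ▸ hA1n)
  have hnm : n ≠ m := fun h => hA1m (h ▸ hA1n)
  have hna1 : n ≠ a1 := fun h => hYA (point_unique ha1l (h ▸ hYn) hYl hAa1 hA)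
  have hA'n : A' ∉ n := by
    intro h
    have hnd : n = d := line_unique hA1A' hA1n h hA1d hA'd
    exact hYZ (point_unique (Ne.symm hdl).symm (hnd ▸ hYn) hYl (mkPoint_ax hdl).1 (mkPoint_ax hdl).2)
  obtain ⟨O, hOa1, hOA, hOA1⟩ := exists_third h6 a1 A A1
  have hOl : O ∉ l := fun h => hOA (point_unique ha1l hOa1 h hAa1 hA)
  have hOn : O ∉ n := fun h => hOA1 (point_unique (Ne.symm hna1) hOa1 h hA1a1 hA1n)
  set g := persp l n O hOl hOn with hg_def
  have hgA : g ⟨A, hA⟩ = ⟨A1, hA1n⟩ :=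
    persp_eq hOl hOn ⟨A, hA⟩ A1 hA1n a1 hOa1 hAa1 hA1a1
  set B1 : P := (g ⟨B, hB⟩ : P) with hB1_def
  have hB1n : B1 ∈ n := (g ⟨B, hB⟩).2
  set C1 : P := (g ⟨C, hC⟩ : P) with hC1_def
  have hC1n : C1 ∈ n := (g ⟨C, hC⟩).2
  have hA1B1 : A1 ≠ B1 := by
    intro h
    have : g ⟨A, hA⟩ = g ⟨B, hB⟩ := by rw [hgA]; exact Subtype.ext h
    exact hAB (congrArg Subtype.val (persp_inj hOl hOn this))
  have hA1C1 : A1 ≠ C1 := by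
    intro h
    have : g ⟨A, hA⟩ = g ⟨C, hC⟩ := by rw [hgA]; exact Subtype.ext h
    exact hAC (congrArg Subtype.val (persp_inj hOl hOn this))
  have hB1C1 : B1 ≠ C1 := fun h =>
    hBC (congrArg Subtype.val (persp_inj hOl hOn (Subtype.ext h)))
  obtain ⟨h, hproj, hhA, hhB, hhC⟩ :=
    good_case h6 n m hnm A1 B1 C1 hA1n hB1n hC1n hA1B1 hA1C1 hB1C1
      A' B' C' hA' hB' hC' hAB' hAC' hBC' hA1m hA'n
  refine ⟨h ∘ g,
    IsProjectivity.comp (.persp (persp_isPersp hOl hOn)) hproj, ?_, ?_, ?_⟩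
  · show h (g ⟨A, hA⟩) = _
    rw [hgA, hhA]
  · show h (g ⟨B, hB⟩) = _
    rw [show g ⟨B, hB⟩ = ⟨B1, hB1n⟩ from rfl, hhB]
  · show h (g ⟨C, hC⟩) = _
    rw [show g ⟨C, hC⟩ = ⟨C1, hC1n⟩ from rfl, hhC]

end Helpers

/-- **Existence of projectivities.** Given any three distinct points `A, B, C`
on a line `l`, and any three distinct points `A', B', C'` on a line `m`, there
exists a projectivity `f` from the range of `l` to the range of `m` such that
`f A = A'`, `f B = B'` and `f C = C'`. -/
theorem projectivity_exists
    [Configuration.ProjectivePlane P L]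
    (h6 : LinesHaveAtLeast P L 6)
    (l m : L)
    (A B C : P) (hA : A ∈ l) (hB : B ∈ l) (hC : C ∈ l)
    (hAB : A ≠ B) (hAC : A ≠ C) (hBC : B ≠ C)
    (A' B' C' : P) (hA' : A' ∈ m) (hB' : B' ∈ m) (hC' : C' ∈ m)
    (hAB' : A' ≠ B') (hAC' : A' ≠ C') (hBC' : B' ≠ C') :
    ∃ f : Rng P L l → Rng P L m, IsProjectivity P L l m f ∧
      f ⟨A, hA⟩ = ⟨A', hA'⟩ ∧ f ⟨B, hB⟩ = ⟨B', hB'⟩ ∧ f ⟨C, hC⟩ = ⟨C', hC'⟩ := by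
  exact proj_aux h6 l m A B C hA hB hC hAB hAC hBC A' B' C' hA' hB' hC' hAB' hAC' hBC'
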